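/- arXiv:math/0412542 — 5 statements merged into one kernel-verified Lean document; each statement's English description precedes it below -/
import Mathlib

section
/- Let n ∈ ℕ^M be a vector of positive integers and let R_n = {(k_+,k_-) ∈ ℤ_+^M × ℤ_+^M : n∘k_+ = n∘k_-} where n∘k = Σ_l n_l k_l. Call k ∈ R_n minimal if k ≠ 0 and k cannot be written as k' + k'' with k', k'' ∈ R_n both nonzero. Then every minimal element k = (k_+,k_-) satisfies k_{+l} ≤ Σ_{j=1}^M n_j and k_{-l} ≤ Σ_{j=1}^M n_j for every l = 1,…,M. Consequently the set of minimal elements of R_n is finite. -/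
/-- The resonance semigroup `R_n ⊂ ℤ_+^M × ℤ_+^M`. -/
def ResonanceSet (M : ℕ) (n : Fin M → ℕ) : Set ((Fin M → ℕ) × (Fin M → ℕ)) :=
  {k | ∑ l, n l * k.1 l = ∑ l, n l * k.2 l}

/-- `k` is a minimal resonance element: nonzero and not a sum of two nonzero
elements of `R_n`. -/
def IsMinimalResonance (M : ℕ) (n : Fin M → ℕ)
    (k : (Fin M → ℕ) × (Fin M → ℕ)) : Prop :=
  k ∈ ResonanceSet M n ∧ k ≠ 0 ∧
    ∀ k' k'', k' ∈ ResonanceSet M n → k'' ∈ ResonanceSet M n →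
      k' ≠ 0 → k'' ≠ 0 → k ≠ k' + k''

lemma sum_single_mul (M : ℕ) (n : Fin M → ℕ) (l : Fin M) (c : ℕ) :
    ∑ i, n i * (Pi.single l c : Fin M → ℕ) i = n l * c := by
  rw [Finset.sum_eq_single l]
  · simp
  · intro i _ hi; simp [Pi.single_apply, hi]
  · simp

lemma swap_min {M : ℕ} {n : Fin M → ℕ} {a b : Fin M → ℕ}
    (h : IsMinimalResonance M n (a, b)) : IsMinimalResonance M n (b, a) := by
  obtain ⟨hm, hne, hmin⟩ := h
  refine ⟨hm.symm, ?_, ?_⟩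
  · simp only [ne_eq, Prod.ext_iff, Prod.fst_zero, Prod.snd_zero] at hne ⊢
    tauto
  · rintro k' k'' h1 h2 h3 h4 heq
    apply hmin (k'.2, k'.1) (k''.2, k''.1) h1.symm h2.symm
    · simp only [ne_eq, Prod.ext_iff, Prod.fst_zero, Prod.snd_zero] at h3 ⊢
      tauto
    · simp only [ne_eq, Prod.ext_iff, Prod.fst_zero, Prod.snd_zero] at h4 ⊢
      tauto
    · simp only [Prod.ext_iff, Prod.fst_add, Prod.snd_add] at heq ⊢
      tauto

lemma not_min_of_big {M : ℕ} {n : Fin M → ℕ} (hn : ∀ l, 0 < n l)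
    {a b : Fin M → ℕ} {l : Fin M} (hl : ∑ j, n j < a l) :
    ¬ IsMinimalResonance M n (a, b) := by
  rintro ⟨hmem, hne, hmin⟩
  simp only [ResonanceSet, Set.mem_setOf_eq] at hmem
  have hnl : n l ≤ ∑ j, n j := Finset.single_le_sum (fun i _ => Nat.zero_le _) (Finset.mem_univ l)
  -- find m with n l ≤ b m
  have hm : ∃ m, n l ≤ b m := by
    by_contra h; push_neg at h
    have h1 : ∑ i, n i * b i + ∑ i, n i ≤ n l * ∑ i, n i := by
      rw [← Finset.sum_add_distrib, Finset.mul_sum]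
      apply Finset.sum_le_sum
      intro i _
      have hbi : b i + 1 ≤ n l := h i
      calc n i * b i + n i = n i * (b i + 1) := by ring
        _ ≤ n i * n l := Nat.mul_le_mul_left _ hbi
        _ = n l * n i := mul_comm _ _
    have h2 : n l * ∑ j, n j < ∑ i, n i * a i := by
      calc n l * ∑ j, n j < n l * a l := (Nat.mul_lt_mul_left (hn l)).mpr hl
        _ ≤ ∑ i, n i * a i :=
          Finset.single_le_sum (f := fun i => n i * a i) (fun i _ => Nat.zero_le _)
            (Finset.mem_univ l)
    omega
  obtain ⟨m, hm⟩ := hm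
  have hnm : n m ≤ ∑ j, n j := Finset.single_le_sum (fun i _ => Nat.zero_le _) (Finset.mem_univ m)
  have hal : n m ≤ a l := le_trans hnm (le_of_lt hl)
  set a'' : Fin M → ℕ := Pi.single l (n m) with ha''
  set b'' : Fin M → ℕ := Pi.single m (n l) with hb''
  have ha''le : ∀ i, a'' i ≤ a i := by
    intro i
    rcases eq_or_ne i l with rfl | h
    · simpa [ha''] using hal
    · simp [ha'', Pi.single_apply, h]
  have hb''le : ∀ i, b'' i ≤ b i := by
    intro i
    rcases eq_or_ne i m with rfl | h
    · simpa [hb''] using hm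
    · simp [hb'', Pi.single_apply, h]
  have ha : a = (a - a'') + a'' := by
    funext i
    simp [Nat.sub_add_cancel (ha''le i)]
  have hb : b = (b - b'') + b'' := by
    funext i
    simp [Nat.sub_add_cancel (hb''le i)]
  have hsum'' : ∑ i, n i * a'' i = n l * n m := sum_single_mul M n l (n m)
  have hsumb'' : ∑ i, n i * b'' i = n l * n m := by
    rw [hb'', sum_single_mul, mul_comm]
  have h'' : (a'', b'') ∈ ResonanceSet M n := by
    simp only [ResonanceSet, Set.mem_setOf_eq]
    rw [hsum'', hsumb'']
  have e1 : ∑ i, n i * (a - a'') i + n l * n m = ∑ i, n i * a i := by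
    conv_rhs => rw [ha]
    simp only [Pi.add_apply, Nat.mul_add]
    rw [Finset.sum_add_distrib, hsum'']
  have e2 : ∑ i, n i * (b - b'') i + n l * n m = ∑ i, n i * b i := by
    conv_rhs => rw [hb]
    simp only [Pi.add_apply, Nat.mul_add]
    rw [Finset.sum_add_distrib, hsumb'']
  have h' : (a - a'', b - b'') ∈ ResonanceSet M n := by
    simp only [ResonanceSet, Set.mem_setOf_eq]
    omega
  have hne'' : ((a'', b'') : (Fin M → ℕ) × (Fin M → ℕ)) ≠ 0 := by
    intro h0
    have h1 := congrArg (fun p => p.1 l) h0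
    simp [ha''] at h1
    exact absurd h1 (hn m).ne'
  have hne' : ((a - a'', b - b'') : (Fin M → ℕ) × (Fin M → ℕ)) ≠ 0 := by
    intro h0
    have h1 := congrArg (fun p => p.1 l) h0
    simp [ha''] at h1
    omega
  exact hmin _ _ h' h'' hne' hne''
    (by rw [Prod.ext_iff]; exact ⟨ha, hb⟩)

/-- Every minimal resonance element has all components bounded by `Σ n`, and
the set of minimal resonance elements is finite. -/
theorem minimal_resonance_bounded_and_finite
    (M : ℕ) (n : Fin M → ℕ) (hn : ∀ l, 0 < n l) :
    (∀ k, IsMinimalResonance M n k →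
      ∀ l, k.1 l ≤ ∑ j, n j ∧ k.2 l ≤ ∑ j, n j) ∧
    {k | IsMinimalResonance M n k}.Finite := by
  have hbound : ∀ k, IsMinimalResonance M n k →
      ∀ l, k.1 l ≤ ∑ j, n j ∧ k.2 l ≤ ∑ j, n j := by
    rintro ⟨a, b⟩ hk l
    constructor
    · by_contra h
      push_neg at h
      exact not_min_of_big hn h hk
    · by_contra h
      push_neg at h
      exact not_min_of_big hn h (swap_min hk)
  refine ⟨hbound, ?_⟩
  apply Set.Finite.subset ((Set.finite_Icc (0 : Fin M → ℕ) (fun _ => ∑ j, n j)).prod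
    (Set.finite_Icc (0 : Fin M → ℕ) (fun _ => ∑ j, n j)))
  intro k hk
  have h := hbound k hk
  simp only [Set.mem_prod, Set.mem_Icc, Pi.le_def]
  exact ⟨⟨fun i => Nat.zero_le _, fun i => (h i).1⟩, fun i => Nat.zero_le _, fun i => (h i).2⟩
end

section
/- For α, β ∈ ℤ^M write α_+ and α_- for the componentwise positive and negative parts (so α = α_+ − α_-, α_+, α_- ∈ ℤ_+^M, α_{+l}α_{-l} = 0), define [α,β] = α_+β_- − α_-β_+ (componentwise products), and define α∘̇β = min(α_+ + β_+, α_- + β_-) ∈ ℤ_+^M (componentwise minimum). Then [α+β, γ] = [α,γ] + [β,γ] + (α∘̇β)·γ, where (α∘̇β)·γ denotes the componentwise product of α∘̇β with γ. -/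
/-- Componentwise positive part of an integer vector. -/
def vpos {M : ℕ} (α : Fin M → ℤ) : Fin M → ℤ := fun l => max (α l) 0

/-- Componentwise negative part of an integer vector. -/
def vneg {M : ℕ} (α : Fin M → ℤ) : Fin M → ℤ := fun l => max (-(α l)) 0

/-- The bracket `[α,β] = α_+ β_- − α_- β_+` (componentwise products). -/
def zBracket {M : ℕ} (α β : Fin M → ℤ) : Fin M → ℤ :=
  fun l => vpos α l * vneg β l - vneg α l * vpos β l

/-- The anomaly `α ∘̇ β = min(α_+ + β_+, α_- + β_-)` (componentwise). -/
def anomaly {M : ℕ} (α β : Fin M → ℤ) : Fin M → ℤ :=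
  fun l => min (vpos α l + vpos β l) (vneg α l + vneg β l)


theorem zBracket_key (a b c : ℤ) :
    max (a+b) 0 * max (-c) 0 - max (-(a+b)) 0 * max c 0 =
      (max a 0 * max (-c) 0 - max (-a) 0 * max c 0) +
      (max b 0 * max (-c) 0 - max (-b) 0 * max c 0) +
      min (max a 0 + max b 0) (max (-a) 0 + max (-b) 0) * c := by
  set m := min (max a 0 + max b 0) (max (-a) 0 + max (-b) 0) with hm
  have h1 : max (a+b) 0 = max a 0 + max b 0 - m := by omega
  have h2 : max (-(a+b)) 0 = max (-a) 0 + max (-b) 0 - m := by omega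
  have h3 : max c 0 - max (-c) 0 = c := by omega
  rw [h1, h2]
  linear_combination m * h3

/-- The anomalous additivity law
`[α+β, γ] = [α,γ] + [β,γ] + (α ∘̇ β)·γ`, componentwise. -/
theorem zBracket_add_anomaly {M : ℕ} (α β γ : Fin M → ℤ) (l : Fin M) :
    zBracket (α + β) γ l = zBracket α γ l + zBracket β γ l +
      anomaly α β l * γ l := by
  simp only [zBracket, anomaly, vpos, vneg, Pi.add_apply]
  exact zBracket_key (α l) (β l) (γ l)
end

section
/- For α, β, γ ∈ ℤ^M, with α∘̇β = min(α_+ + β_+, α_- + β_-) componentwise (positive/negative parts taken componentwise), the following identities hold: (i) α∘̇β = α_+ + β_+ − (α+β)_+ = α_- + β_- − (α+β)_-; (ii) (α∘̇β) + ((α+β)∘̇γ) = (α∘̇(β+γ)) + (β∘̇γ). -/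
/-- Identities for the anomaly:
`α∘̇β = α_+ + β_+ − (α+β)_+ = α_- + β_- − (α+β)_-` and the cocycle identity
`(α∘̇β) + ((α+β)∘̇γ) = (α∘̇(β+γ)) + (β∘̇γ)`. -/
theorem anomaly_identities {M : ℕ} (α β γ : Fin M → ℤ) (l : Fin M) :
    anomaly α β l = vpos α l + vpos β l - vpos (α + β) l ∧
    anomaly α β l = vneg α l + vneg β l - vneg (α + β) l ∧
    anomaly α β l + anomaly (α + β) γ l =
      anomaly α (β + γ) l + anomaly β γ l := by
  simp only [anomaly, vpos, vneg, Pi.add_apply]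
  omega
end

section
/- Let n_1, n_2 be positive integers, and consider the 4-dimensional Poisson structure on ℝ^4 with real coordinates (A_1, A_2, Re A_α, Im A_α) determined by {A_α, Ā_α} = i(n_2^2 A_2 − n_1^2 A_1) A_1^{n_2−1} A_2^{n_1−1}, {A_α, A_1} = i n_2 A_α, {A_α, A_2} = −i n_1 A_α, {A_1, A_2} = 0 (extended as a biderivation to all polynomials). Then this bracket satisfies the Jacobi identity on all of ℝ^4, and the functions C_0 = n_1 A_1 + n_2 A_2 and C_1 = |A_α|^2 − A_1^{n_2} A_2^{n_1} are Casimir functions (they Poisson-commute with A_1, A_2, A_α, Ā_α). -/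
set_option maxHeartbeats 1000000


noncomputable section

/-- Partial derivative in the `i`-th coordinate of a function on `ℝ⁴`. -/
def pd (i : Fin 4) (F : (Fin 4 → ℝ) → ℝ) (x : Fin 4 → ℝ) : ℝ :=
  deriv (fun t => F (Function.update x i t)) (x i)

/-- The function `h = (n₂² A₂ − n₁² A₁) A₁^{n₂−1} A₂^{n₁−1}` appearing in
`{A_α, Ā_α} = i h`; coordinates `x = (A₁, A₂, Re A_α, Im A_α)`. -/
def hres (n1 n2 : ℕ) (x : Fin 4 → ℝ) : ℝ :=
  ((n2 : ℝ)^2 * x 1 - (n1 : ℝ)^2 * x 0) * (x 0) ^ (n2 - 1) * (x 1) ^ (n1 - 1)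

/-- The Poisson bivector determined by the relations
`{A_α, Ā_α} = i h`, `{A_α, A₁} = i n₂ A_α`, `{A_α, A₂} = −i n₁ A_α`,
`{A₁, A₂} = 0` in real coordinates `(A₁, A₂, u, v)` with `A_α = u + iv`. -/
def resTensor (n1 n2 : ℕ) : Fin 4 → Fin 4 → (Fin 4 → ℝ) → ℝ :=
  ![![fun _ => 0, fun _ => 0, fun x => (n2 : ℝ) * x 3, fun x => -(n2 : ℝ) * x 2],
    ![fun _ => 0, fun _ => 0, fun x => -(n1 : ℝ) * x 3, fun x => (n1 : ℝ) * x 2],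
    ![fun x => -(n2 : ℝ) * x 3, fun x => (n1 : ℝ) * x 3, fun _ => 0,
      fun x => -hres n1 n2 x / 2],
    ![fun x => (n2 : ℝ) * x 2, fun x => -(n1 : ℝ) * x 2,
      fun x => hres n1 n2 x / 2, fun _ => 0]]

/-- The bracket `{F,G} = Σ_{i,j} π_{ij} ∂_i F ∂_j G` defined by the
bivector `resTensor`. -/
def resPB (n1 n2 : ℕ) (F G : (Fin 4 → ℝ) → ℝ) (x : Fin 4 → ℝ) : ℝ :=
  ∑ i, ∑ j, resTensor n1 n2 i j x * pd i F x * pd j G x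

/-- The coordinate functions. -/
def coordF (i : Fin 4) : (Fin 4 → ℝ) → ℝ := fun x => x i

/-- The Casimir `C₀ = n₁ A₁ + n₂ A₂`. -/
def Cas0 (n1 n2 : ℕ) : (Fin 4 → ℝ) → ℝ :=
  fun x => (n1 : ℝ) * x 0 + (n2 : ℝ) * x 1

/-- The Casimir `C₁ = |A_α|² − A₁^{n₂} A₂^{n₁}`. -/
def Cas1 (n1 n2 : ℕ) : (Fin 4 → ℝ) → ℝ :=
  fun x => (x 2)^2 + (x 3)^2 - (x 0) ^ n2 * (x 1) ^ n1



lemma pd_zero' (i : Fin 4) (x : Fin 4 → ℝ) : pd i (fun _ => (0:ℝ)) x = 0 := by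
  simp [pd]

lemma pd_coord' (i j : Fin 4) (x : Fin 4 → ℝ) :
    pd i (fun y => y j) x = if j = i then 1 else 0 := by
  unfold pd
  rcases eq_or_ne j i with h | h
  · subst h; simp
  · simp [Function.update_of_ne h, h]

lemma pd_mul_coord' (c : ℝ) (i j : Fin 4) (x : Fin 4 → ℝ) :
    pd i (fun y => c * y j) x = if j = i then c else 0 := by
  unfold pd
  rcases eq_or_ne j i with h | h
  · subst h
    simp only [Function.update_self, if_pos rfl]
    simpa using ((hasDerivAt_id (x j)).const_mul c).deriv
  · simp [Function.update_of_ne h, h]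

lemma pd_neg' (i : Fin 4) (F : (Fin 4 → ℝ) → ℝ) (x : Fin 4 → ℝ) :
    pd i (fun y => -(F y)) x = -(pd i F x) := by
  unfold pd; exact deriv.neg

lemma pd_mul_const' (i : Fin 4) (F : (Fin 4 → ℝ) → ℝ) (c : ℝ) (x : Fin 4 → ℝ) :
    pd i (fun y => F y * c) x = pd i F x * c := by
  unfold pd; exact deriv_mul_const_field c

lemma pd_div_const' (i : Fin 4) (F : (Fin 4 → ℝ) → ℝ) (c : ℝ) (x : Fin 4 → ℝ) :
    pd i (fun y => F y / c) x = pd i F x / c := by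
  unfold pd; exact deriv_div_const c

lemma pd2_hres' (n1 n2 : ℕ) (x : Fin 4 → ℝ) : pd 2 (hres n1 n2) x = 0 := by
  unfold pd hres
  simp [Function.update_of_ne (show (0:Fin 4) ≠ 2 by decide),
        Function.update_of_ne (show (1:Fin 4) ≠ 2 by decide)]

lemma pd3_hres' (n1 n2 : ℕ) (x : Fin 4 → ℝ) : pd 3 (hres n1 n2) x = 0 := by
  unfold pd hres
  simp [Function.update_of_ne (show (0:Fin 4) ≠ 3 by decide),
        Function.update_of_ne (show (1:Fin 4) ≠ 3 by decide)]

lemma pd_Cas0_0' (n1 n2 : ℕ) (x : Fin 4 → ℝ) : pd 0 (Cas0 n1 n2) x = n1 := by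
  unfold pd Cas0
  simp only [Function.update_self, Function.update_of_ne (show (1:Fin 4) ≠ 0 by decide)]
  simpa using (((hasDerivAt_id (x 0)).const_mul (n1:ℝ)).add_const ((n2:ℝ) * x 1)).deriv

lemma pd_Cas0_1' (n1 n2 : ℕ) (x : Fin 4 → ℝ) : pd 1 (Cas0 n1 n2) x = n2 := by
  unfold pd Cas0
  simp only [Function.update_self, Function.update_of_ne (show (0:Fin 4) ≠ 1 by decide)]
  simpa using (((hasDerivAt_id (x 1)).const_mul (n2:ℝ)).const_add ((n1:ℝ) * x 0)).deriv

lemma pd_Cas0_2' (n1 n2 : ℕ) (x : Fin 4 → ℝ) : pd 2 (Cas0 n1 n2) x = 0 := by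
  unfold pd Cas0
  simp [Function.update_of_ne (show (0:Fin 4) ≠ 2 by decide),
        Function.update_of_ne (show (1:Fin 4) ≠ 2 by decide)]

lemma pd_Cas0_3' (n1 n2 : ℕ) (x : Fin 4 → ℝ) : pd 3 (Cas0 n1 n2) x = 0 := by
  unfold pd Cas0
  simp [Function.update_of_ne (show (0:Fin 4) ≠ 3 by decide),
        Function.update_of_ne (show (1:Fin 4) ≠ 3 by decide)]

lemma pd_Cas1_0' (n1 n2 : ℕ) (x : Fin 4 → ℝ) :
    pd 0 (Cas1 n1 n2) x = -((n2:ℝ) * x 0 ^ (n2-1) * x 1 ^ n1) := by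
  unfold pd Cas1
  simp only [Function.update_self,
    Function.update_of_ne (show (1:Fin 4) ≠ 0 by decide),
    Function.update_of_ne (show (2:Fin 4) ≠ 0 by decide),
    Function.update_of_ne (show (3:Fin 4) ≠ 0 by decide)]
  simpa [mul_comm, mul_assoc, mul_left_comm] using
    (((hasDerivAt_pow n2 (x 0)).mul_const ((x 1) ^ n1)).const_sub ((x 2)^2 + (x 3)^2)).deriv

lemma pd_Cas1_1' (n1 n2 : ℕ) (x : Fin 4 → ℝ) :
    pd 1 (Cas1 n1 n2) x = -((n1:ℝ) * x 0 ^ n2 * x 1 ^ (n1-1)) := by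
  unfold pd Cas1
  simp only [Function.update_self,
    Function.update_of_ne (show (0:Fin 4) ≠ 1 by decide),
    Function.update_of_ne (show (2:Fin 4) ≠ 1 by decide),
    Function.update_of_ne (show (3:Fin 4) ≠ 1 by decide)]
  simpa [mul_comm, mul_assoc, mul_left_comm] using
    (((hasDerivAt_pow n1 (x 1)).const_mul ((x 0) ^ n2)).const_sub ((x 2)^2 + (x 3)^2)).deriv

lemma pd_Cas1_2' (n1 n2 : ℕ) (x : Fin 4 → ℝ) : pd 2 (Cas1 n1 n2) x = 2 * x 2 := by
  unfold pd Cas1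
  simp only [Function.update_self,
    Function.update_of_ne (show (0:Fin 4) ≠ 2 by decide),
    Function.update_of_ne (show (1:Fin 4) ≠ 2 by decide),
    Function.update_of_ne (show (3:Fin 4) ≠ 2 by decide)]
  simpa using
    (((hasDerivAt_pow 2 (x 2)).add_const ((x 3)^2)).sub_const ((x 0)^n2 * (x 1)^n1)).deriv

lemma pd_Cas1_3' (n1 n2 : ℕ) (x : Fin 4 → ℝ) : pd 3 (Cas1 n1 n2) x = 2 * x 3 := by
  unfold pd Cas1
  simp only [Function.update_self,
    Function.update_of_ne (show (0:Fin 4) ≠ 3 by decide),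
    Function.update_of_ne (show (1:Fin 4) ≠ 3 by decide),
    Function.update_of_ne (show (2:Fin 4) ≠ 3 by decide)]
  simpa using
    (((hasDerivAt_pow 2 (x 3)).const_add ((x 2)^2)).sub_const ((x 0)^n2 * (x 1)^n1)).deriv

lemma inner_bracket' (n1 n2 : ℕ) (i j : Fin 4) :
    resPB n1 n2 (coordF i) (coordF j) = resTensor n1 n2 i j := by
  funext x
  unfold resPB coordF
  fin_cases i <;> fin_cases j <;>
    simp [Fin.sum_univ_four, pd_coord', resTensor]


/-- The Jacobi identity holds for the bracket on all of `ℝ⁴` (verified on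
coordinate functions), and `C₀`, `C₁` are Casimir functions. -/
theorem resonance_bracket_jacobi_and_casimirs
    (n1 n2 : ℕ) (h1 : 0 < n1) (h2 : 0 < n2) :
    (∀ i j k : Fin 4, ∀ x,
      resPB n1 n2 (resPB n1 n2 (coordF i) (coordF j)) (coordF k) x +
      resPB n1 n2 (resPB n1 n2 (coordF j) (coordF k)) (coordF i) x +
      resPB n1 n2 (resPB n1 n2 (coordF k) (coordF i)) (coordF j) x = 0) ∧
    (∀ i : Fin 4, ∀ x, resPB n1 n2 (Cas0 n1 n2) (coordF i) x = 0) ∧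
    (∀ i : Fin 4, ∀ x, resPB n1 n2 (Cas1 n1 n2) (coordF i) x = 0) := by
  obtain ⟨m1, rfl⟩ : ∃ m, n1 = m + 1 := ⟨n1 - 1, (Nat.succ_pred_eq_of_pos h1).symm⟩
  obtain ⟨m2, rfl⟩ : ∃ m, n2 = m + 1 := ⟨n2 - 1, (Nat.succ_pred_eq_of_pos h2).symm⟩
  refine ⟨?_, ?_, ?_⟩
  · intro i j k x
    simp only [inner_bracket']
    unfold resPB coordF
    fin_cases i <;> fin_cases j <;> fin_cases k <;>
      · simp [Fin.sum_univ_four, resTensor, pd_coord', pd_zero', pd_mul_coord', neg_div,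
          pd_neg', pd_div_const', pd_mul_const', pd2_hres', pd3_hres']
        try ring
  · intro i x
    unfold resPB coordF
    fin_cases i <;>
      · simp [Fin.sum_univ_four, resTensor, pd_coord', pd_Cas0_0', pd_Cas0_1',
          pd_Cas0_2', pd_Cas0_3']
        try ring
  · intro i x
    unfold resPB coordF
    fin_cases i <;>
      · simp [Fin.sum_univ_four, resTensor, pd_coord', pd_Cas1_0', pd_Cas1_1',
          pd_Cas1_2', pd_Cas1_3', hres]
        try push_cast
        try ring


end
end

section
/- In the Weyl algebra with [ẑ_l, ẑ_j*] = ħ δ_{lj}, let n_1, n_2 be coprime positive integers and set Â_α = (ẑ_2*)^{n_1} ẑ_1^{n_2}, Â_α* = (ẑ_1*)^{n_2} ẑ_2^{n_1}, Â_1 = ẑ_1* ẑ_1, Â_2 = ẑ_2* ẑ_2. Then [Â_α, Â_1] = ħ n_2 Â_α, [Â_α, Â_2] = −ħ n_1 Â_α, [Â_1, Â_2] = 0, and [Â_α, Â_α*] = f(Â_1, Â_2), where f(A_1,A_2) = ρ(A_1 + ħ n_2, A_2 − ħ n_1) − ρ(A_1, A_2) with ρ(A_1,A_2) = A_1(A_1−ħ)⋯(A_1−(n_2−1)ħ)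 · (A_2+ħ)(A_2+2ħ)⋯(A_2+n_1ħ). Moreover Ĉ_0 = n_1 Â_1 + n_2 Â_2 commutes with Â_α, Â_α*, Â_1, Â_2, and Â_α* Â_α = ρ(Â_1, Â_2). -/
noncomputable section

variable {A : Type*} [Ring A] [Algebra ℂ A]

namespace QRAaux

variable {A : Type*} [Ring A] [Algebra ℂ A]

/-- Product of shifted factors `∏ (N + c • 1)`. -/
def Lp (N : A) (cs : List ℂ) : A := (cs.map (fun c => N + c • (1:A))).prod

@[simp] lemma Lp_nil (N : A) : Lp N [] = 1 := rfl

@[simp] lemma Lp_cons (N : A) (c : ℂ) (cs : List ℂ) :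
    Lp N (c :: cs) = (N + c • 1) * Lp N cs := by simp [Lp]

lemma central_comm (c : ℂ) (y : A) : Commute (c • (1:A)) y := by
  simp [Commute, SemiconjBy, smul_one_mul, mul_smul_one]

lemma commute_shift {y N : A} (h : Commute y N) (c : ℂ) : Commute y (N + c • 1) :=
  h.add_right (central_comm c y).symm

lemma commute_Lp {y N : A} (h : Commute y N) (cs : List ℂ) : Commute y (Lp N cs) := by
  apply Commute.list_prod_right
  intro x hx
  obtain ⟨c, -, rfl⟩ := List.mem_map.1 hx
  exact commute_shift h c

lemma Lp_factor_comm (N : A) (c : ℂ) (cs : List ℂ) :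
    Commute (N + c • 1) (Lp N cs) :=
  commute_Lp ((Commute.refl N).add_left (central_comm c N)) cs

lemma Lp_append (N : A) (cs ds : List ℂ) :
    Lp N (cs ++ ds) = Lp N cs * Lp N ds := by simp [Lp]

lemma Lp_shift_base (N : A) (d : ℂ) (cs : List ℂ) :
    Lp (N + d • 1) cs = Lp N (cs.map (fun c => c + d)) := by
  induction cs with
  | nil => simp
  | cons c cs ih =>
    rw [List.map_cons, Lp_cons, Lp_cons, ih, add_assoc, ← add_smul, add_comm d c]

/-- Reversing the shift sequence does not change the product. -/
lemma Lp_rev (N : A) (f : ℕ → ℂ) (n : ℕ) :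
    Lp N ((List.range n).map f) = Lp N ((List.range n).map (fun j => f (n - 1 - j))) := by
  induction n generalizing f with
  | zero => simp
  | succ n ih =>
    have hL : Lp N ((List.range (n+1)).map f)
        = Lp N ((List.range n).map f) * (N + f n • 1) := by
      rw [List.range_succ, List.map_append, Lp_append]
      simp [Lp]
    have hR : Lp N ((List.range (n+1)).map (fun j => f (n + 1 - 1 - j)))
        = (N + f n • 1) * Lp N ((List.range n).map (fun j => f (n - 1 - j))) := by
      rw [List.range_succ_eq_map, List.map_cons, Lp_cons, List.map_map]
      have hfun : ((fun j => f (n + 1 - 1 - j)) ∘ Nat.succ) = (fun j => f (n - 1 - j)) := by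
        funext j
        simp only [Function.comp_apply]
        congr 1
        omega
      rw [hfun]
      congr 2
    rw [hL, hR, ← ih f]
    exact ((Lp_factor_comm N (f n) ((List.range n).map f)).eq).symm

section Weyl

variable (hb : ℂ) {x xs : A} (hx : x * xs = xs * x + hb • (1:A))

include hx

lemma x_shift (c : ℂ) :
    x * (xs * x + c • (1:A)) = (xs * x + (c + hb) • (1:A)) * x := by
  rw [mul_add, add_mul, ← mul_assoc, hx, add_mul, mul_smul_one, smul_one_mul,
    smul_one_mul, add_smul]
  abel

lemma shift_x (c : ℂ) :
    (xs * x + c • (1:A)) * x = x * (xs * x + (c - hb) • (1:A)) := by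
  rw [x_shift hb hx (c - hb), sub_add_cancel]

lemma xs_shift (c : ℂ) :
    (xs * x + c • (1:A)) * xs = xs * (xs * x + (c + hb) • (1:A)) := by
  rw [add_mul, mul_add, mul_assoc, hx, mul_add, smul_one_mul, mul_smul_one,
    mul_smul_one, add_smul, ← mul_assoc]
  abel

lemma xs_shift' (c : ℂ) :
    xs * (xs * x + c • (1:A)) = (xs * x + (c - hb) • (1:A)) * xs := by
  rw [xs_shift hb hx (c - hb), sub_add_cancel]

lemma Lp_mul_x (cs : List ℂ) :
    Lp (xs * x) cs * x = x * Lp (xs * x) (cs.map (· - hb)) := by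
  induction cs with
  | nil => simp
  | cons c cs ih =>
    rw [List.map_cons, Lp_cons, Lp_cons, mul_assoc, ih, ← mul_assoc,
      shift_x hb hx, mul_assoc]

lemma Lp_mul_xs (cs : List ℂ) :
    Lp (xs * x) cs * xs = xs * Lp (xs * x) (cs.map (· + hb)) := by
  induction cs with
  | nil => simp
  | cons c cs ih =>
    rw [List.map_cons, Lp_cons, Lp_cons, mul_assoc, ih, ← mul_assoc,
      xs_shift hb hx, mul_assoc]

lemma pow_shift (n : ℕ) (c : ℂ) :
    x ^ n * (xs * x + c • (1:A)) = (xs * x + (c + (n:ℂ) * hb) • (1:A)) * x ^ n := by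
  induction n generalizing c with
  | zero => simp
  | succ n ih =>
    rw [pow_succ', mul_assoc, ih, ← mul_assoc, x_shift hb hx, mul_assoc, ← pow_succ',
      show c + (n:ℂ) * hb + hb = c + ((n+1:ℕ):ℂ) * hb by push_cast; ring]

lemma xs_pow_shift (n : ℕ) (c : ℂ) :
    xs ^ n * (xs * x + c • (1:A)) = (xs * x + (c - (n:ℂ) * hb) • (1:A)) * xs ^ n := by
  induction n generalizing c with
  | zero => simp
  | succ n ih =>
    rw [pow_succ', mul_assoc, ih, ← mul_assoc, xs_shift' hb hx, mul_assoc, ← pow_succ',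
      show c - (n:ℂ) * hb - hb = c - ((n+1:ℕ):ℂ) * hb by push_cast; ring]

lemma pow_mul_N (n : ℕ) :
    x ^ n * (xs * x) = (xs * x + ((n:ℂ) * hb) • (1:A)) * x ^ n := by
  simpa using pow_shift hb hx n 0

lemma xs_pow_mul_N (n : ℕ) :
    xs ^ n * (xs * x) = (xs * x + (-((n:ℂ) * hb)) • (1:A)) * xs ^ n := by
  simpa [neg_smul] using xs_pow_shift hb hx n 0

lemma xspow_xpow (n : ℕ) :
    xs ^ n * x ^ n = Lp (xs * x) ((List.range n).map (fun j : ℕ => -((j:ℂ) * hb))) := by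
  induction n with
  | zero => simp
  | succ n ih =>
    rw [pow_succ' xs, pow_succ x, show xs * xs ^ n * (x ^ n * x) = xs * (xs ^ n * x ^ n * x) by
      noncomm_ring, ih, Lp_mul_x hb hx, ← mul_assoc, List.map_map,
      List.range_succ_eq_map, List.map_cons, Lp_cons, List.map_map,
      show (fun (c:ℂ) => c - hb) ∘ (fun j : ℕ => -((j:ℂ) * hb))
          = (fun j : ℕ => -((j:ℂ) * hb)) ∘ Nat.succ from funext fun j => by
        simp only [Function.comp_apply]; push_cast; ring]
    norm_num

lemma xpow_xspow (n : ℕ) :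
    x ^ n * xs ^ n = Lp (xs * x) ((List.range n).map (fun j : ℕ => ((j:ℂ) + 1) * hb)) := by
  induction n with
  | zero => simp
  | succ n ih =>
    rw [pow_succ' x, pow_succ xs, show x * x ^ n * (xs ^ n * xs) = x * (x ^ n * xs ^ n * xs) by
      noncomm_ring, ih, Lp_mul_xs hb hx, ← mul_assoc, hx, List.map_map,
      List.range_succ_eq_map, List.map_cons, Lp_cons, List.map_map,
      show (fun (c:ℂ) => c + hb) ∘ (fun j : ℕ => ((j:ℂ) + 1) * hb)
          = (fun j : ℕ => ((j:ℂ) + 1) * hb) ∘ Nat.succ from funext fun j => by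
        simp only [Function.comp_apply]; push_cast; ring]
    norm_num

end Weyl

end QRAaux

open QRAaux

/-- `Â_α = (ẑ₂*)^{n₁} ẑ₁^{n₂}`. -/
def Aalpha (n1 n2 : ℕ) (z zs : Fin 2 → A) : A := (zs 1) ^ n1 * (z 0) ^ n2

/-- `Â_α* = (ẑ₁*)^{n₂} ẑ₂^{n₁}`. -/
def AalphaStar (n1 n2 : ℕ) (z zs : Fin 2 → A) : A := (zs 0) ^ n2 * (z 1) ^ n1

/-- `Â₁ = ẑ₁* ẑ₁`. -/
def Aone (z zs : Fin 2 → A) : A := zs 0 * z 0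

/-- `Â₂ = ẑ₂* ẑ₂`. -/
def Atwo (z zs : Fin 2 → A) : A := zs 1 * z 1

/-- `ρ(A₁,A₂) = A₁(A₁−ħ)⋯(A₁−(n₂−1)ħ) · (A₂+ħ)⋯(A₂+n₁ħ)`. -/
def rhoPoly (hb : ℂ) (n1 n2 : ℕ) (a1 a2 : A) : A :=
  (((List.range n2).map (fun j => a1 - ((j : ℂ) * hb) • (1 : A))).prod) *
  (((List.range n1).map (fun j => a2 + (((j : ℂ) + 1) * hb) • (1 : A))).prod)

/-- `f(A₁,A₂) = ρ(A₁ + ħn₂, A₂ − ħn₁) − ρ(A₁,A₂)`. -/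
def fPoly (hb : ℂ) (n1 n2 : ℕ) (a1 a2 : A) : A :=
  rhoPoly hb n1 n2 (a1 + (hb * (n2 : ℂ)) • (1 : A))
    (a2 - (hb * (n1 : ℂ)) • (1 : A)) - rhoPoly hb n1 n2 a1 a2

/-- `Ĉ₀ = n₁ Â₁ + n₂ Â₂`. -/
def Czero (n1 n2 : ℕ) (z zs : Fin 2 → A) : A :=
  (n1 : ℂ) • Aone z zs + (n2 : ℂ) • Atwo z zs

/-- Commutation relations of the quantum resonance algebra of the
two-dimensional `n₁ : n₂` oscillator, realized in any algebra carrying the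
Weyl relations `[ẑ_l, ẑ_j*] = ħ δ_{lj}`. -/
theorem quantum_resonance_algebra_relations
    (hb : ℂ) (n1 n2 : ℕ) (h1 : 0 < n1) (h2 : 0 < n2)
    (hcop : Nat.Coprime n1 n2) (z zs : Fin 2 → A)
    (hzz : ∀ l j, z l * z j = z j * z l)
    (hss : ∀ l j, zs l * zs j = zs j * zs l)
    (hzs : ∀ l j, z l * zs j - zs j * z l = (if l = j then hb else 0) • (1 : A)) :
    Aalpha n1 n2 z zs * Aone z zs - Aone z zs * Aalpha n1 n2 z zs =
      (hb * (n2 : ℂ)) • Aalpha n1 n2 z zs ∧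
    Aalpha n1 n2 z zs * Atwo z zs - Atwo z zs * Aalpha n1 n2 z zs =
      (-(hb * (n1 : ℂ))) • Aalpha n1 n2 z zs ∧
    Aone z zs * Atwo z zs = Atwo z zs * Aone z zs ∧
    Aalpha n1 n2 z zs * AalphaStar n1 n2 z zs -
      AalphaStar n1 n2 z zs * Aalpha n1 n2 z zs =
      fPoly hb n1 n2 (Aone z zs) (Atwo z zs) ∧
    Czero n1 n2 z zs * Aalpha n1 n2 z zs =
      Aalpha n1 n2 z zs * Czero n1 n2 z zs ∧
    Czero n1 n2 z zs * AalphaStar n1 n2 z zs =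
      AalphaStar n1 n2 z zs * Czero n1 n2 z zs ∧
    Czero n1 n2 z zs * Aone z zs = Aone z zs * Czero n1 n2 z zs ∧
    Czero n1 n2 z zs * Atwo z zs = Atwo z zs * Czero n1 n2 z zs ∧
    AalphaStar n1 n2 z zs * Aalpha n1 n2 z zs =
      rhoPoly hb n1 n2 (Aone z zs) (Atwo z zs) := by
  -- basic Weyl relations
  have hx1 : z 0 * zs 0 = zs 0 * z 0 + hb • (1:A) := by
    have h := hzs 0 0
    rw [if_pos rfl, sub_eq_iff_eq_add] at h
    rw [h, add_comm]
  have hx2 : z 1 * zs 1 = zs 1 * z 1 + hb • (1:A) := by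
    have h := hzs 1 1
    rw [if_pos rfl, sub_eq_iff_eq_add] at h
    rw [h, add_comm]
  -- cross-mode commutation
  have cab : Commute (z 0) (z 1) := hzz 0 1
  have csasb : Commute (zs 0) (zs 1) := hss 0 1
  have ca_sb : Commute (z 0) (zs 1) := by
    have h := hzs 0 1
    rw [if_neg (by decide), zero_smul] at h
    exact sub_eq_zero.1 h
  have cb_sa : Commute (z 1) (zs 0) := by
    have h := hzs 1 0
    rw [if_neg (by decide), zero_smul] at h
    exact sub_eq_zero.1 h
  have c1 : Commute (zs 1) (zs 0 * z 0) := csasb.symm.mul_right ca_sb.symm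
  have c2 : Commute (z 0) (zs 1 * z 1) := ca_sb.mul_right cab
  have c3 : Commute (zs 0) (zs 1 * z 1) := csasb.mul_right cb_sa.symm
  have c4 : Commute (z 1) (zs 0 * z 0) := cb_sa.mul_right (hzz 1 0)
  have c5 : Commute (zs 0 * z 0) (zs 1 * z 1) := c3.mul_left c2
  -- the shift lists
  set ρ1 : List ℂ := (List.range n1).map (fun j : ℕ => -((j:ℂ) * hb)) with hρ1
  set ρ2 : List ℂ := (List.range n2).map (fun j : ℕ => -((j:ℂ) * hb)) with hρ2
  set σ1 : List ℂ := (List.range n1).map (fun j : ℕ => ((j:ℂ) + 1) * hb) with hσ1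
  set σ2 : List ℂ := (List.range n2).map (fun j : ℕ => ((j:ℂ) + 1) * hb) with hσ2
  have hrho : ∀ (a1 a2 : A), rhoPoly hb n1 n2 a1 a2 = Lp a1 ρ2 * Lp a2 σ1 := by
    intro a1 a2
    unfold rhoPoly Lp
    simp only [bind_pure_comp, List.map_eq_map]
    rw [hρ2, hσ1, List.map_map, List.map_map, List.map_map, List.map_map]
    refine congrArg₂ (· * ·) ?_ ?_ <;>
      · apply congrArg List.prod
        apply List.map_congr_left
        intro j hj
        simp [Function.comp, sub_eq_add_neg]
  -- key commutators
  have key1 : (zs 1)^n1 * (z 0)^n2 * (zs 0 * z 0)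
      = (zs 0 * z 0 + (hb * (n2:ℂ)) • 1) * ((zs 1)^n1 * (z 0)^n2) := by
    rw [mul_assoc, pow_mul_N hb hx1 n2, ← mul_assoc,
      ((commute_shift c1 ((n2:ℂ) * hb)).pow_left n1).eq, mul_assoc, mul_comm (n2:ℂ) hb]
  have key2 : (zs 1)^n1 * (z 0)^n2 * (zs 1 * z 1)
      = (zs 1 * z 1 + (-(hb * (n1:ℂ))) • 1) * ((zs 1)^n1 * (z 0)^n2) := by
    rw [mul_assoc, (c2.pow_left n2).eq, ← mul_assoc, xs_pow_mul_N hb hx2 n1,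
      mul_assoc, mul_comm (n1:ℂ) hb]
  have key3 : (zs 0)^n2 * (z 1)^n1 * (zs 0 * z 0)
      = (zs 0 * z 0 + (-(hb * (n2:ℂ))) • 1) * ((zs 0)^n2 * (z 1)^n1) := by
    rw [mul_assoc, (c4.pow_left n1).eq, ← mul_assoc, xs_pow_mul_N hb hx1 n2,
      mul_assoc, mul_comm (n2:ℂ) hb]
  have key4 : (zs 0)^n2 * (z 1)^n1 * (zs 1 * z 1)
      = (zs 1 * z 1 + (hb * (n1:ℂ)) • 1) * ((zs 0)^n2 * (z 1)^n1) := by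
    rw [mul_assoc, pow_mul_N hb hx2 n1, ← mul_assoc,
      ((commute_shift c3 ((n1:ℂ) * hb)).pow_left n2).eq, mul_assoc, mul_comm (n1:ℂ) hb]
  -- goal 9 first
  have h9 : AalphaStar n1 n2 z zs * Aalpha n1 n2 z zs
      = rhoPoly hb n1 n2 (Aone z zs) (Atwo z zs) := by
    simp only [AalphaStar, Aalpha, Aone, Atwo]
    rw [hrho]
    calc (zs 0)^n2 * (z 1)^n1 * ((zs 1)^n1 * (z 0)^n2)
        = (zs 0)^n2 * ((z 1)^n1 * (zs 1)^n1) * (z 0)^n2 := by noncomm_ring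
      _ = (zs 0)^n2 * Lp (zs 1 * z 1) σ1 * (z 0)^n2 := by rw [xpow_xspow hb hx2]
      _ = Lp (zs 1 * z 1) σ1 * ((zs 0)^n2 * (z 0)^n2) := by
          rw [((commute_Lp c3 σ1).pow_left n2).eq, mul_assoc]
      _ = Lp (zs 1 * z 1) σ1 * Lp (zs 0 * z 0) ρ2 := by rw [xspow_xpow hb hx1]
      _ = Lp (zs 0 * z 0) ρ2 * Lp (zs 1 * z 1) σ1 :=
          (commute_Lp (commute_Lp c5 σ1).symm ρ2).eq
  refine ⟨?_, ?_, c5.eq, ?_, ?_, ?_, ?_, ?_, h9⟩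
  · -- goal 1
    simp only [Aalpha, Aone]
    rw [key1, add_mul, smul_one_mul, add_sub_cancel_left]
  · -- goal 2
    simp only [Aalpha, Atwo]
    rw [key2, add_mul, smul_one_mul, add_sub_cancel_left]
  · -- goal 4
    simp only [fPoly]
    rw [← h9]
    congr 1
    simp only [Aalpha, AalphaStar, Aone, Atwo]
    rw [hrho, Lp_shift_base, sub_eq_add_neg, ← neg_smul, Lp_shift_base, hρ2, hσ1,
      List.map_map, List.map_map,
      Lp_rev (zs 0 * z 0) ((fun c => c + hb * (n2:ℂ)) ∘ (fun j : ℕ => -((j:ℂ) * hb))) n2,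
      Lp_rev (zs 1 * z 1) ((fun c => c + -(hb * (n1:ℂ))) ∘ (fun j : ℕ => ((j:ℂ) + 1) * hb)) n1]
    have e1 : (List.range n2).map
          (fun j => ((fun c => c + hb * (n2:ℂ)) ∘ (fun j : ℕ => -((j:ℂ) * hb))) (n2 - 1 - j))
        = σ2 := by
      rw [hσ2]
      apply List.map_congr_left
      intro j hj
      have hj' : j + 1 ≤ n2 := List.mem_range.1 hj
      simp only [Function.comp_apply]
      rw [Nat.sub_sub, Nat.cast_sub (by omega : 1 + j ≤ n2)]
      push_cast
      ring
    have e2 : (List.range n1).map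
          (fun j => ((fun c => c + -(hb * (n1:ℂ))) ∘ (fun j : ℕ => ((j:ℂ) + 1) * hb)) (n1 - 1 - j))
        = ρ1 := by
      rw [hρ1]
      apply List.map_congr_left
      intro j hj
      have hj' : j + 1 ≤ n1 := List.mem_range.1 hj
      simp only [Function.comp_apply]
      rw [Nat.sub_sub, Nat.cast_sub (by omega : 1 + j ≤ n1)]
      push_cast
      ring
    rw [e1, e2]
    -- now: Aα * Aα* = Lp N1 σ2 * Lp N2 ρ1
    calc (zs 1)^n1 * (z 0)^n2 * ((zs 0)^n2 * (z 1)^n1)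
        = (zs 1)^n1 * ((z 0)^n2 * (zs 0)^n2) * (z 1)^n1 := by noncomm_ring
      _ = (zs 1)^n1 * Lp (zs 0 * z 0) σ2 * (z 1)^n1 := by rw [xpow_xspow hb hx1]
      _ = Lp (zs 0 * z 0) σ2 * ((zs 1)^n1 * (z 1)^n1) := by
          rw [((commute_Lp c1 σ2).pow_left n1).eq, mul_assoc]
      _ = Lp (zs 0 * z 0) σ2 * Lp (zs 1 * z 1) ρ1 := by rw [xspow_xpow hb hx2]
  · -- goal 5
    simp only [Czero, Aalpha, Aone, Atwo]
    rw [add_mul, smul_mul_assoc, smul_mul_assoc, mul_add, mul_smul_comm, mul_smul_comm,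
      key1, key2, add_mul, add_mul, smul_one_mul, smul_one_mul]
    module
  · -- goal 6
    simp only [Czero, AalphaStar, Aone, Atwo]
    rw [add_mul, smul_mul_assoc, smul_mul_assoc, mul_add, mul_smul_comm, mul_smul_comm,
      key3, key4, add_mul, add_mul, smul_one_mul, smul_one_mul]
    module
  · -- goal 7
    simp only [Czero, Aone, Atwo]
    rw [add_mul, smul_mul_assoc, smul_mul_assoc, mul_add, mul_smul_comm, mul_smul_comm,
      c5.eq]
  · -- goal 8
    simp only [Czero, Aone, Atwo]
    rw [add_mul, smul_mul_assoc, smul_mul_assoc, mul_add, mul_smul_comm, mul_smul_comm,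
      c5.eq]


end
end
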